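/- Let f be a transcendental entire function, let R0 > 0 be such that M(r, f) > r for all r ≥ R0, and let ε : [R0, ∞) → (0, 1) be a nonincreasing function such that ε(M^n(r, f)) ≥ ε(r)^{n+1} for all r ≥ R0 and all n ≥ 1. Define η(r) = ε(r) M(r, f). Then there exists R1 ≥ R0 such that η maps [R1, ∞) into itself and, for all r ≥ R1 and all k ≥ 1, η^k(r) ≥ ε(r)^{-(k+1)} M^k(ε(r)·r, f), where η^k denotes the k-th iterate of η. -/

import Mathlib

/-- The maximum modulus function `M(r, f) = max_{|z| = r} |f z|`. -/
noncomputable def maxMod (f : ℂ → ℂ) (r : ℝ) : ℝ :=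
  sSup ((fun z => ‖f z‖) '' Metric.sphere (0 : ℂ) r)

/-- `f` is a transcendental entire function: differentiable on all of `ℂ`
and not (the evaluation of) a polynomial. -/
def EntireTranscendental (f : ℂ → ℂ) : Prop :=
  Differentiable ℂ f ∧ ¬∃ p : Polynomial ℂ, ∀ z, f z = p.eval z

lemma maxMod_nonneg (f : ℂ → ℂ) (r : ℝ) : 0 ≤ maxMod f r := by
  apply Real.sSup_nonneg
  rintro x ⟨z, _, rfl⟩
  exact norm_nonneg _

lemma abs_le_maxMod {f : ℂ → ℂ} (hf : Continuous f) {z : ℂ} {r : ℝ} (hz : ‖z‖ = r) :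
    ‖f z‖ ≤ maxMod f r := by
  apply le_csSup
  · exact ((isCompact_sphere (0:ℂ) r).image (continuous_norm.comp hf)).bddAbove
  · exact ⟨z, by simpa [mem_sphere_zero_iff_norm] using hz, rfl⟩

lemma maxMod_le {f : ℂ → ℂ} {r C : ℝ} (hC : 0 ≤ C)
    (h : ∀ z : ℂ, ‖z‖ = r → ‖f z‖ ≤ C) : maxMod f r ≤ C := by
  apply Real.sSup_le _ hC
  rintro x ⟨z, hz, rfl⟩
  exact h z (by simpa [mem_sphere_zero_iff_norm] using hz)

lemma maxMod_mono {f : ℂ → ℂ} (hf : Differentiable ℂ f) {a b : ℝ} (h0 : 0 ≤ a) (hab : a ≤ b) :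
    maxMod f a ≤ maxMod f b := by
  rcases eq_or_lt_of_le (h0.trans hab) with hb | hb
  · have hab' : a = b := le_antisymm hab (hb ▸ h0)
    rw [hab']
  apply maxMod_le (maxMod_nonneg f b)
  intro z hz
  have hcl : z ∈ closure (Metric.ball (0:ℂ) b) := by
    rw [closure_ball (0:ℂ) hb.ne']
    simpa [Metric.mem_closedBall, dist_zero_right] using hz.le.trans hab |>.trans_eq rfl
  have hb' : ∀ w ∈ frontier (Metric.ball (0:ℂ) b), ‖f w‖ ≤ maxMod f b := by
    intro w hw
    rw [frontier_ball (0:ℂ) hb.ne'] at hw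
    exact abs_le_maxMod hf.continuous (by simpa [mem_sphere_zero_iff_norm] using hw)
  exact Complex.norm_le_of_forall_mem_frontier_norm_le (U := Metric.ball (0:ℂ) b)
    Metric.isBounded_ball hf.diffContOnCl hb' hcl

lemma maxMod_quasiconvex {f : ℂ → ℂ} (hf : Differentiable ℂ f) {a b c : ℝ}
    (ha : 0 < a) (hab : a ≤ b) (hbc : b ≤ c) :
    maxMod f b / b ^ 4 ≤ max (maxMod f a / a ^ 4) (maxMod f c / c ^ 4) := by
  rcases eq_or_lt_of_le hab with rfl | hab'
  · exact le_max_left _ _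
  rcases eq_or_lt_of_le hbc with rfl | hbc'
  · exact le_max_right _ _
  set K := max (maxMod f a / a ^ 4) (maxMod f c / c ^ 4) with hK
  have hb : 0 < b := ha.trans hab'
  have hc : 0 < c := hb.trans hbc'
  have hK0 : 0 ≤ K := le_trans (div_nonneg (maxMod_nonneg f a) (by positivity)) (le_max_left _ _)
  set U : Set ℂ := {z : ℂ | a < ‖z‖ ∧ ‖z‖ < c} with hU
  have hUopen : IsOpen U :=
    (isOpen_lt continuous_const continuous_norm).inter (isOpen_lt continuous_norm continuous_const)
  have hUbdd : Bornology.IsBounded U :=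
    (Metric.isBounded_closedBall (x := (0:ℂ)) (r := c)).subset
      (fun z hz => by simpa [Metric.mem_closedBall, dist_zero_right] using hz.2.le)
  set S : Set ℂ := {z : ℂ | a ≤ ‖z‖ ∧ ‖z‖ ≤ c} with hS
  have hSclosed : IsClosed S :=
    (isClosed_le continuous_const continuous_norm).inter (isClosed_le continuous_norm continuous_const)
  have hUS : closure U ⊆ S := closure_minimal (fun z hz => ⟨hz.1.le, hz.2.le⟩) hSclosed
  set g : ℂ → ℂ := fun z => f z / z ^ 4 with hg
  have hgdiff : ∀ z : ℂ, z ≠ 0 → DifferentiableAt ℂ g z := by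
    intro z hz
    exact (hf z).div (differentiableAt_pow 4) (pow_ne_zero 4 hz)
  have hne : ∀ z ∈ S, z ≠ 0 := by
    intro z hz h0
    rw [h0] at hz
    have : a ≤ (0:ℝ) := by simpa using hz.1
    linarith
  have hdc : DiffContOnCl ℂ g U := by
    constructor
    · intro z hz
      exact (hgdiff z (hne z (hUS (subset_closure hz)))).differentiableWithinAt
    · intro z hz
      exact (hgdiff z (hne z (hUS hz))).continuousAt.continuousWithinAt
  have hfr : ∀ z ∈ frontier U, ‖g z‖ ≤ K := by
    intro z hz
    have hzS : z ∈ S := hUS (frontier_subset_closure hz)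
    have hznU : z ∉ U := by
      intro h
      have : z ∈ interior U := hUopen.interior_eq.symm ▸ h
      exact hz.2 this
    have hcase : ‖z‖ = a ∨ ‖z‖ = c := by
      by_contra h
      push_neg at h
      exact hznU ⟨lt_of_le_of_ne hzS.1 (Ne.symm h.1), lt_of_le_of_ne hzS.2 h.2⟩
    have hgz : ‖g z‖ = ‖f z‖ / ‖z‖ ^ 4 := by
      simp [hg, norm_div, norm_pow]
    rcases hcase with h | h
    · rw [hgz, h]
      refine le_trans ?_ (le_max_left _ _)
      have := abs_le_maxMod hf.continuous h
      gcongr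
    · rw [hgz, h]
      refine le_trans ?_ (le_max_right _ _)
      have := abs_le_maxMod hf.continuous h
      gcongr
  have hb4 : (0:ℝ) < b ^ 4 := by positivity
  rw [div_le_iff₀ hb4]
  apply maxMod_le (by positivity)
  intro z hz
  have hzU : z ∈ U := ⟨hz ▸ hab', hz ▸ hbc'⟩
  have hzcl : z ∈ closure U := subset_closure hzU
  have hgle : ‖g z‖ ≤ K :=
    Complex.norm_le_of_forall_mem_frontier_norm_le hUbdd hdc hfr hzcl
  have hz0 : z ≠ 0 := hne z (hUS hzcl)
  have hgz : ‖g z‖ = ‖f z‖ / b ^ 4 := by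
    simp [hg, norm_div, norm_pow, hz]
  rw [hgz, div_le_iff₀ hb4] at hgle
  exact hgle

open MeasureTheory intervalIntegral in
lemma poly_of_growth {f : ℂ → ℂ} (hf : Differentiable ℂ f) {C r0 : ℝ} (hr0 : 1 ≤ r0)
    (hC : ∀ s : ℝ, r0 ≤ s → maxMod f s ≤ C * s ^ 4) :
    ∃ p : Polynomial ℂ, ∀ z, f z = p.eval z := by
  set p := cauchyPowerSeries f 0 1 with hp
  have h1 : HasFPowerSeriesOnBall f p 0 ⊤ := hf.hasFPowerSeriesOnBall 0 (R := 1) one_pos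
  have hpR : ∀ R : ℝ, 0 < R → cauchyPowerSeries f 0 R = p := by
    intro R hR
    have h2 : HasFPowerSeriesOnBall f (cauchyPowerSeries f 0 ((Real.toNNReal R : NNReal) : ℝ)) 0 ⊤ :=
      hf.hasFPowerSeriesOnBall 0 (R := Real.toNNReal R) (by simpa using hR)
    rw [Real.coe_toNNReal R hR.le] at h2
    exact h2.hasFPowerSeriesAt.eq_formalMultilinearSeries h1.hasFPowerSeriesAt
  have hC0 : 0 ≤ C := by
    have h := hC r0 le_rfl
    have := maxMod_nonneg f r0
    nlinarith [pow_pos (show (0:ℝ) < r0 by linarith) 4]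
  -- coefficient bound
  have hcoeff : ∀ n : ℕ, ∀ R : ℝ, r0 ≤ R → ‖p n‖ ≤ C * R ^ 4 * (R⁻¹) ^ n := by
    intro n R hR
    have hRpos : 0 < R := lt_of_lt_of_le zero_lt_one (hr0.trans hR)
    have key := norm_cauchyPowerSeries_le f 0 R n
    rw [hpR R hRpos] at key
    have hint : ∫ θ : ℝ in (0)..2 * Real.pi, ‖f (circleMap 0 R θ)‖ ≤
        2 * Real.pi * maxMod f R := by
      have hle : ∀ θ ∈ Set.Icc (0:ℝ) (2 * Real.pi), ‖f (circleMap 0 R θ)‖ ≤ maxMod f R := by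
        intro θ _
        apply abs_le_maxMod hf.continuous
        have := norm_circleMap_zero R θ
        simpa [abs_of_pos hRpos] using this
      calc ∫ θ : ℝ in (0)..2 * Real.pi, ‖f (circleMap 0 R θ)‖
          ≤ ∫ _ : ℝ in (0)..2 * Real.pi, maxMod f R := by
            apply intervalIntegral.integral_mono_on Real.two_pi_pos.le
            · exact ((hf.continuous.comp (continuous_circleMap 0 R)).norm).intervalIntegrable _ _
            · exact intervalIntegrable_const
            · exact hle
        _ = 2 * Real.pi * maxMod f R := by simp [mul_comm]
    have h2pi : (0:ℝ) < 2 * Real.pi := Real.two_pi_pos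
    have hM4 : maxMod f R ≤ C * R ^ 4 := hC R hR
    calc ‖p n‖ ≤ ((2 * Real.pi)⁻¹ * ∫ θ : ℝ in (0)..2 * Real.pi, ‖f (circleMap 0 R θ)‖) *
          |R|⁻¹ ^ n := key
      _ ≤ ((2 * Real.pi)⁻¹ * (2 * Real.pi * maxMod f R)) * |R|⁻¹ ^ n := by
          gcongr
      _ = maxMod f R * (R⁻¹) ^ n := by
          rw [abs_of_pos hRpos]
          field_simp
      _ ≤ C * R ^ 4 * (R⁻¹) ^ n := by
          gcongr
  -- coefficients vanish for n ≥ 5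
  have hvanish : ∀ n : ℕ, 5 ≤ n → p n = 0 := by
    intro n hn
    have hle : ∀ δ : ℝ, 0 < δ → ‖p n‖ ≤ δ := by
      intro δ hδ
      set R : ℝ := max r0 (C / δ) with hRdef
      have hRR : r0 ≤ R := le_max_left _ _
      have hR1 : 1 ≤ R := hr0.trans hRR
      have hRpos : 0 < R := lt_of_lt_of_le one_pos hR1
      have h1' := hcoeff n R hRR
      have hpow : C * R ^ 4 * (R⁻¹) ^ n ≤ C / R := by
        have h5 : R ^ 5 ≤ R ^ n := pow_le_pow_right₀ hR1 hn
        have hinv : (R ^ n)⁻¹ ≤ (R ^ 5)⁻¹ :=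
          inv_anti₀ (pow_pos (lt_of_lt_of_le one_pos hR1) 5) h5
        rw [inv_pow]
        calc C * R ^ 4 * (R ^ n)⁻¹ ≤ C * R ^ 4 * (R ^ 5)⁻¹ := by gcongr
          _ = C / R := by
            rw [div_eq_mul_inv]
            field_simp
      have hCR : C / R ≤ δ := by
        rw [div_le_iff₀ hRpos]
        rcases le_or_gt (C / δ) r0 with h | h
        · have : R = r0 := by rw [hRdef, max_eq_left h]
          nlinarith [hr0, hδ, (div_le_iff₀ hδ).mp (h.trans (le_max_left r0 (C/δ)) |>.trans le_rfl)]
        · have hRge : C / δ ≤ R := le_max_right _ _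
          calc C = (C / δ) * δ := by field_simp
            _ ≤ R * δ := by gcongr
            _ = δ * R := by ring
      linarith
    have : ‖p n‖ ≤ 0 := by
      by_contra h
      push_neg at h
      have := hle (‖p n‖ / 2) (by linarith)
      linarith
    exact norm_le_zero_iff.mp this
  -- f equals a finite sum
  refine ⟨∑ n ∈ Finset.range 5, Polynomial.C (p.coeff n) * Polynomial.X ^ n, fun z => ?_⟩
  have hmem : z ∈ Metric.eball (0 : ℂ) ⊤ := by simp [Metric.eball_top]
  have hs : HasSum (fun n : ℕ => p n fun _ => z) (f z) := by
    have := h1.hasSum (y := z) hmem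
    simpa using this
  have hs' : HasSum (fun n : ℕ => p n fun _ => z)
      (∑ n ∈ Finset.range 5, (p n fun _ => z)) := by
    apply hasSum_sum_of_ne_finset_zero
    intro n hn
    rw [hvanish n (by simpa using Nat.le_of_not_lt (by simpa [Finset.mem_range] using hn))]
    simp
  have hfz : f z = ∑ n ∈ Finset.range 5, (p n fun _ => z) := hs.unique hs'
  rw [hfz]
  rw [Polynomial.eval_finset_sum]
  apply Finset.sum_congr rfl
  intro n _
  rw [FormalMultilinearSeries.apply_eq_pow_smul_coeff, smul_eq_mul, Polynomial.eval_mul,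
    Polynomial.eval_C, Polynomial.eval_pow, Polynomial.eval_X, mul_comm]

theorem simply_connected_fast_escaping_stmt4
    (f : ℂ → ℂ) (hf : EntireTranscendental f)
    (R0 : ℝ) (hR0 : 0 < R0) (hM : ∀ r ≥ R0, r < maxMod f r)
    (ε : ℝ → ℝ)
    (hε01 : ∀ r ≥ R0, ε r ∈ Set.Ioo (0 : ℝ) 1)
    (hεmono : ∀ r s, R0 ≤ r → r ≤ s → ε s ≤ ε r)
    (hεM : ∀ r ≥ R0, ∀ n : ℕ, 1 ≤ n → ε r ^ (n + 1) ≤ ε ((maxMod f)^[n] r)) :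
    ∃ R1 : ℝ, R0 ≤ R1 ∧ (∀ r ≥ R1, R1 ≤ ε r * maxMod f r) ∧
      ∀ r ≥ R1, ∀ k : ℕ, 1 ≤ k →
        (ε r)⁻¹ ^ (k + 1) * (maxMod f)^[k] (ε r * r) ≤
          (fun s => ε s * maxMod f s)^[k] r := by
  classical
  obtain ⟨hdiff, htrans⟩ := hf
  set M : ℝ → ℝ := maxMod f with hMdef
  set r0 : ℝ := max R0 1 with hr0def
  have hr0pos : (0:ℝ) < r0 := lt_of_lt_of_le one_pos (le_max_right _ _)
  have hr01 : (1:ℝ) ≤ r0 := le_max_right _ _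
  have hr0R0 : R0 ≤ r0 := le_max_left _ _
  -- unboundedness of M s / s^4
  have hunb : ∀ Cb : ℝ, ∃ s, r0 ≤ s ∧ Cb < M s / s ^ 4 := by
    intro Cb
    by_contra h
    push_neg at h
    apply htrans
    apply poly_of_growth hdiff hr01 (C := Cb)
    intro s hs
    have hspos : 0 < s := lt_of_lt_of_le hr0pos hs
    have h2 := h s hs
    rw [div_le_iff₀ (by positivity)] at h2
    linarith
  -- the growth threshold W
  obtain ⟨W, hWr0, hWφ⟩ := hunb (M r0 / r0 ^ 4)
  have hWgt : r0 < W := by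
    rcases eq_or_lt_of_le hWr0 with rfl | h
    · exact absurd hWφ (lt_irrefl _)
    · exact h
  have hW1 : (1:ℝ) < W := lt_of_le_of_lt hr01 hWgt
  have hWR0 : R0 ≤ W := hr0R0.trans hWgt.le
  have hWpos : (0:ℝ) < W := lt_trans one_pos hW1
  have hφmono : ∀ t s : ℝ, W ≤ t → t ≤ s → M t / t ^ 4 ≤ M s / s ^ 4 := by
    intro t s hWt hts
    have hφs : M r0 / r0 ^ 4 < M s / s ^ 4 := by
      have hq := maxMod_quasiconvex hdiff hr0pos hWr0 (hWt.trans hts)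
      rcases le_max_iff.mp hq with h | h
      · linarith
      · linarith
    have hq2 := maxMod_quasiconvex hdiff hr0pos (hWr0.trans hWt) hts
    rcases le_max_iff.mp hq2 with h | h
    · linarith
    · exact h
  -- D1 : scaling up
  have hD1 : ∀ t a : ℝ, W ≤ t → 1 ≤ a → a ^ 4 * M t ≤ M (a * t) := by
    intro t a hWt ha
    have htpos : 0 < t := lt_of_lt_of_le hWpos hWt
    have hat : t ≤ a * t := le_mul_of_one_le_left htpos.le ha
    have h := hφmono t (a * t) hWt hat
    rw [div_le_div_iff₀ (by positivity) (by positivity)] at h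
    have hexp : (a * t) ^ 4 = a ^ 4 * t ^ 4 := by ring
    nlinarith [pow_pos htpos 4]
  -- D2 : squaring
  have hD2 : ∀ s : ℝ, W ^ 2 ≤ s → s ^ 2 ≤ M s := by
    intro s hs
    have hWs : W ≤ s := le_trans (by nlinarith) hs
    have hspos : 0 < s := lt_of_lt_of_le hWpos hWs
    have h := hφmono W s le_rfl hWs
    rw [div_le_div_iff₀ (by positivity) (by positivity)] at h
    have hMW : W < M W := hM W hWR0
    have hs2 : W ^ 4 ≤ s ^ 2 := by nlinarith
    nlinarith [mul_nonneg (sub_nonneg.mpr hMW.le) (pow_nonneg hspos.le 4),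
      mul_nonneg (sub_nonneg.mpr hs2) (mul_nonneg hWpos.le (pow_nonneg hspos.le 2)),
      mul_nonneg (sub_nonneg.mpr hW1.le) (mul_nonneg (pow_nonneg hWpos.le 4) (pow_nonneg hspos.le 2)),
      pow_pos hWpos 4]
  -- the sequence s n = M^[n] (W^2)
  set S : ℝ := W ^ 2 with hSdef
  have hS1 : (1:ℝ) < S := by nlinarith
  have hSW : W ≤ S := by nlinarith
  have hSR0 : R0 ≤ S := hWR0.trans hSW
  set sq : ℕ → ℝ := fun n => M^[n] S with hsqdef
  have hsq0 : sq 0 = S := rfl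
  have hsqsucc : ∀ n, sq (n + 1) = M (sq n) := by
    intro n
    simp only [hsqdef, Function.iterate_succ_apply']
  have hsqge : ∀ n, S ≤ sq n := by
    intro n
    induction n with
    | zero => exact le_rfl
    | succ n ih =>
      rw [hsqsucc]
      exact ih.trans (hM (sq n) (hSR0.trans ih)).le
  have hsqlt : ∀ n, sq n < sq (n + 1) := by
    intro n
    rw [hsqsucc]
    exact hM (sq n) (hSR0.trans (hsqge n))
  have hsqstrict : StrictMono sq := strictMono_nat_of_lt_succ hsqlt
  have hsqpos : ∀ n, 0 < sq n := fun n => lt_of_lt_of_le (lt_trans one_pos hS1) (hsqge n)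
  have hsqsq : ∀ n, (sq n) ^ 2 ≤ sq (n + 1) := by
    intro n
    rw [hsqsucc]
    exact hD2 (sq n) (hsqge n)
  have hsqpow : ∀ n, S ^ (n + 1) ≤ sq n := by
    intro n
    induction n with
    | zero => simpa using le_of_eq hsq0.symm
    | succ n ih =>
      have h1 : S ^ (n + 1) * S ≤ sq n * sq n := by
        have := hsqge n
        have hSpos : (0:ℝ) < S := lt_trans one_pos hS1
        exact mul_le_mul ih this hSpos.le (le_trans (by positivity) ih)
      calc S ^ (n + 2) = S ^ (n + 1) * S := by ring
        _ ≤ sq n * sq n := h1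
        _ = (sq n) ^ 2 := by ring
        _ ≤ sq (n + 1) := hsqsq n
  -- epsilon basics
  set e0 : ℝ := ε S with he0def
  have he0 : 0 < e0 ∧ e0 < 1 := ⟨(hε01 S hSR0).1, (hε01 S hSR0).2⟩
  set b : ℝ := e0⁻¹ with hbdef
  have hb1 : 1 < b := one_lt_inv₀ he0.1 |>.mpr he0.2
  have hbpos : 0 < b := lt_trans one_pos hb1
  -- choose m0 with b^2 ≤ sq m0
  obtain ⟨m0, hm0⟩ : ∃ m0, b ^ 2 ≤ sq m0 := by
    obtain ⟨n, hn⟩ := pow_unbounded_of_one_lt (b ^ 2) hS1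
    exact ⟨n, hn.le.trans ((pow_le_pow_right₀ hS1.le (Nat.le_succ n)).trans (hsqpow n))⟩
  -- geometric growth
  have hgeo : ∀ j : ℕ, sq m0 * (b ^ 2) ^ j ≤ sq (m0 + j) := by
    intro j
    induction j with
    | zero => simp
    | succ j ih =>
      have hle : b ^ 2 ≤ sq (m0 + j) := hm0.trans (hsqstrict.monotone (Nat.le_add_right m0 j))
      calc sq m0 * (b ^ 2) ^ (j + 1) = b ^ 2 * (sq m0 * (b ^ 2) ^ j) := by ring
        _ ≤ b ^ 2 * sq (m0 + j) := by
            have : (0:ℝ) ≤ b ^ 2 := by positivity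
            gcongr
        _ ≤ sq (m0 + j) * sq (m0 + j) := by
            have := hsqpos (m0 + j)
            gcongr
        _ = (sq (m0 + j)) ^ 2 := by ring
        _ ≤ sq (m0 + j + 1) := hsqsq (m0 + j)
  -- choose J
  obtain ⟨J, hJ⟩ : ∃ J : ℕ, W ≤ sq m0 * e0 ^ (m0 + 2) * b ^ J := by
    obtain ⟨J, hJ⟩ := pow_unbounded_of_one_lt (W / (sq m0 * e0 ^ (m0 + 2))) hb1
    refine ⟨J, ?_⟩
    have hpos : (0:ℝ) < sq m0 * e0 ^ (m0 + 2) := mul_pos (hsqpos m0) (pow_pos he0.1 _)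
    rw [div_lt_iff₀ hpos] at hJ
    nlinarith
  set N : ℕ := m0 + 1 + J with hNdef
  set R1 : ℝ := sq N with hR1def
  have hR1S : S ≤ R1 := hsqge N
  have hR1R0 : R0 ≤ R1 := hSR0.trans hR1S
  have hR1pos : 0 < R1 := hsqpos N
  -- key lemma : ε r * r ≥ W for r ≥ R1
  have hkey : ∀ r : ℝ, R1 ≤ r → W ≤ ε r * r := by
    intro r hr
    have hrR0 : R0 ≤ r := hR1R0.trans hr
    have hex : ∃ n, r ≤ sq n := by
      obtain ⟨n, hn⟩ := pow_unbounded_of_one_lt r hS1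
      exact ⟨n, hn.le.trans ((pow_le_pow_right₀ hS1.le (Nat.le_succ n)).trans (hsqpow n))⟩
    set n : ℕ := Nat.find hex with hndef
    have hn : r ≤ sq n := Nat.find_spec hex
    have hmin : ∀ m, m < n → sq m < r := by
      intro m hm
      have := Nat.find_min hex hm
      push_neg at this
      exact this
    have hNn : N ≤ n := by
      by_contra h
      push_neg at h
      have := hsqstrict h
      have h2 : sq n < r := lt_of_lt_of_le this hr
      linarith
    obtain ⟨j, hj⟩ : ∃ j : ℕ, n = m0 + 1 + j := ⟨n - (m0 + 1), by omega⟩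
    have hjJ : J ≤ j := by omega
    have hprev : sq (m0 + j) < r := hmin (m0 + j) (by omega)
    -- ε r ≥ e0 ^ (n + 1)
    have hεr : e0 ^ (n + 1) ≤ ε r := by
      have h1 : e0 ^ (n + 1) ≤ ε (sq n) := hεM S hSR0 n (by omega)
      have h2 : ε (sq n) ≤ ε r := hεmono r (sq n) hrR0 hn
      exact h1.trans h2
    have hεrpos : 0 < ε r := (hε01 r hrR0).1
    -- power identity
    have hpowid : e0 ^ (n + 1) * (b ^ 2) ^ j = e0 ^ (m0 + 2) * b ^ j := by
      have hn1 : n + 1 = (m0 + 2) + j := by omega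
      have hmul : e0 * b ^ 2 = b := by
        rw [hbdef, pow_two, ← mul_assoc, mul_inv_cancel₀ he0.1.ne', one_mul]
      rw [hn1, pow_add, mul_assoc, ← mul_pow, hmul]
    have hchain : sq m0 * e0 ^ (m0 + 2) * b ^ j ≤ ε r * r := by
      calc sq m0 * e0 ^ (m0 + 2) * b ^ j = e0 ^ (n + 1) * (sq m0 * (b ^ 2) ^ j) := by
            rw [mul_assoc, ← hpowid]; ring
        _ ≤ e0 ^ (n + 1) * sq (m0 + j) := by
            have : (0:ℝ) ≤ e0 ^ (n + 1) := (pow_pos he0.1 _).le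
            gcongr
            exact hgeo j
        _ ≤ ε r * r := by
            apply mul_le_mul hεr hprev.le (hsqpos (m0 + j)).le hεrpos.le
    refine le_trans ?_ hchain
    calc W ≤ sq m0 * e0 ^ (m0 + 2) * b ^ J := hJ
      _ ≤ sq m0 * e0 ^ (m0 + 2) * b ^ j := by
          have : (0:ℝ) < sq m0 * e0 ^ (m0 + 2) := mul_pos (hsqpos m0) (pow_pos he0.1 _)
          gcongr
          · exact hb1.le
  -- bullet 2
  have hbul2 : ∀ r : ℝ, R1 ≤ r → R1 ≤ ε r * M r := by
    intro r hr
    have hrR0 : R0 ≤ r := hR1R0.trans hr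
    have hrS : S ≤ r := hR1S.trans hr
    have hrpos : 0 < r := lt_of_lt_of_le (lt_trans one_pos hS1) hrS
    have hMr : r ^ 2 ≤ M r := hD2 r hrS
    have hεrpos : 0 < ε r := (hε01 r hrR0).1
    have hWr : W ≤ ε r * r := hkey r hr
    calc R1 ≤ r := hr
      _ = 1 * r := (one_mul r).symm
      _ ≤ (ε r * r) * r := by
          have hW1' : (1:ℝ) ≤ ε r * r := le_trans hW1.le hWr
          gcongr
      _ = ε r * r ^ 2 := by ring
      _ ≤ ε r * M r := by gcongr
  refine ⟨R1, hR1R0, hbul2, ?_⟩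
  -- bullet 3
  intro r hr k hk
  have hrR0 : R0 ≤ r := hR1R0.trans hr
  set c : ℝ := ε r with hcdef
  have hc : 0 < c ∧ c < 1 := ⟨(hε01 r hrR0).1, (hε01 r hrR0).2⟩
  have h1c : 1 ≤ c⁻¹ := (one_le_inv₀ hc.1).mpr hc.2.le
  have hcr : W ≤ c * r := hkey r hr
  have hcrpos : 0 < c * r := lt_of_lt_of_le hWpos hcr
  set η : ℝ → ℝ := fun s => ε s * M s with hηdef
  have hηsucc : ∀ (m : ℕ) (x : ℝ), η^[m + 1] x = η (η^[m] x) := by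
    intro m x
    rw [Function.iterate_succ_apply']
  have hMsucc : ∀ (m : ℕ) (x : ℝ), M^[m + 1] x = M (M^[m] x) := by
    intro m x
    rw [Function.iterate_succ_apply']
  -- iterates of M at c*r stay above W
  have hmW : ∀ m : ℕ, W ≤ M^[m] (c * r) := by
    intro m
    induction m with
    | zero => exact hcr
    | succ m ih =>
      rw [hMsucc]
      exact ih.trans (hM (M^[m] (c * r)) (hWR0.trans ih)).le
  -- main induction
  have hmain : ∀ k : ℕ, 1 ≤ k →
      R1 ≤ η^[k] r ∧ η^[k] r ≤ M^[k] r ∧ c⁻¹ ^ (k + 1) * M^[k] (c * r) ≤ η^[k] r := by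
    intro k hk
    induction k, hk using Nat.le_induction with
    | base =>
      have hη1 : η^[1] r = c * M r := by
        simp [hηdef, hcdef]
      refine ⟨?_, ?_, ?_⟩
      · rw [hη1]
        exact hbul2 r hr
      · rw [hη1]
        have : (0:ℝ) ≤ M r := maxMod_nonneg f r
        calc c * M r ≤ 1 * M r := by gcongr; exact hc.2.le
          _ = M^[1] r := by simp
      · rw [hη1]
        have hD := hD1 (c * r) c⁻¹ hcr h1c
        have hcc : c⁻¹ * (c * r) = r := by
          rw [← mul_assoc, inv_mul_cancel₀ hc.1.ne', one_mul]
        rw [hcc] at hD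
        -- hD : c⁻¹ ^ 4 * M (c * r) ≤ M r
        have hMcr : (0:ℝ) ≤ M (c * r) := maxMod_nonneg f (c * r)
        have hid : c * (c⁻¹ ^ 4 * M (c * r)) = c⁻¹ ^ 3 * M (c * r) := by
          have : c * c⁻¹ ^ 4 = c⁻¹ ^ 3 := by
            rw [show (4:ℕ) = 3 + 1 from rfl, pow_succ]
            calc c * (c⁻¹ ^ 3 * c⁻¹) = (c * c⁻¹) * c⁻¹ ^ 3 := by ring
              _ = c⁻¹ ^ 3 := by rw [mul_inv_cancel₀ hc.1.ne', one_mul]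
          rw [← mul_assoc, this]
        have hstep : c⁻¹ ^ (1 + 1) * M^[1] (c * r) ≤ c⁻¹ ^ 3 * M (c * r) := by
          simp only [Function.iterate_one]
          exact mul_le_mul_of_nonneg_right (pow_le_pow_right₀ h1c (by norm_num)) hMcr
        calc c⁻¹ ^ (1 + 1) * M^[1] (c * r) ≤ c⁻¹ ^ 3 * M (c * r) := hstep
          _ = c * (c⁻¹ ^ 4 * M (c * r)) := hid.symm
          _ ≤ c * M r := by gcongr; exact hc.1.le
    | succ k hk1 ih =>
      obtain ⟨ih1, ih2, ih3⟩ := ih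
      set t : ℝ := η^[k] r with htdef
      have htR0 : R0 ≤ t := hR1R0.trans ih1
      have htpos : 0 < t := lt_of_lt_of_le hR1pos ih1
      have hεt : 0 < ε t ∧ ε t < 1 := ⟨(hε01 t htR0).1, (hε01 t htR0).2⟩
      have hηt : η^[k + 1] r = ε t * M t := by
        rw [hηsucc]
      refine ⟨?_, ?_, ?_⟩
      · rw [hηt]
        exact hbul2 t ih1
      · rw [hηt, hMsucc]
        calc ε t * M t ≤ 1 * M t := by
              gcongr
              · exact maxMod_nonneg f t
              · exact hεt.2.le
          _ = M t := one_mul _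
          _ ≤ M (M^[k] r) := maxMod_mono hdiff htpos.le ih2
      · rw [hηt]
        set m : ℝ := M^[k] (c * r) with hmdef
        have hmWk : W ≤ m := hmW k
        have hmpos : 0 < m := lt_of_lt_of_le hWpos hmWk
        have hεt2 : c ^ (k + 1) ≤ ε t := by
          have h1 : c ^ (k + 1) ≤ ε (M^[k] r) := hεM r hrR0 k hk1
          have h2 : ε (M^[k] r) ≤ ε t := hεmono t (M^[k] r) htR0 ih2
          exact h1.trans h2
        have hak : (1:ℝ) ≤ c⁻¹ ^ (k + 1) := one_le_pow₀ h1c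
        have hD := hD1 m (c⁻¹ ^ (k + 1)) hmWk hak
        have hmono2 : M (c⁻¹ ^ (k + 1) * m) ≤ M t := by
          apply maxMod_mono hdiff _ ih3
          positivity
        have hMt : (c⁻¹ ^ (k + 1)) ^ 4 * M m ≤ M t := le_trans hD hmono2
        have hMm : (0:ℝ) ≤ M m := maxMod_nonneg f m
        have hεtMt : c ^ (k + 1) * ((c⁻¹ ^ (k + 1)) ^ 4 * M m) ≤ ε t * M t := by
          apply mul_le_mul hεt2 hMt _ hεt.1.le
          positivity
        refine le_trans ?_ hεtMt
        rw [hMsucc, ← hmdef]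
        -- goal : c⁻¹ ^ (k + 2) * M m ≤ c ^ (k + 1) * (c⁻¹ ^ (k + 1) ^ 4 * M m)
        have hid2 : c ^ (k + 1) * (c⁻¹ ^ (k + 1)) ^ 4 = c⁻¹ ^ (3 * (k + 1)) := by
          have h5 : c ^ (k + 1) * c⁻¹ ^ (k + 1) = 1 := by
            rw [← mul_pow, mul_inv_cancel₀ hc.1.ne', one_pow]
          calc c ^ (k + 1) * (c⁻¹ ^ (k + 1)) ^ 4
              = (c ^ (k + 1) * c⁻¹ ^ (k + 1)) * (c⁻¹ ^ (k + 1)) ^ 3 := by ring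
            _ = (c⁻¹ ^ (k + 1)) ^ 3 := by rw [h5, one_mul]
            _ = c⁻¹ ^ (3 * (k + 1)) := by rw [← pow_mul, Nat.mul_comm]
        calc c⁻¹ ^ (k + 1 + 1) * M m ≤ c⁻¹ ^ (3 * (k + 1)) * M m :=
              mul_le_mul_of_nonneg_right (pow_le_pow_right₀ h1c (by omega)) hMm
          _ = c ^ (k + 1) * ((c⁻¹ ^ (k + 1)) ^ 4 * M m) := by rw [← mul_assoc, hid2]
  exact (hmain k hk).2.2
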